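/- Let H be a complex Hilbert space, 𝔄 a C*-algebra acting on H, σ : 𝔄 → B(H) a continuous *-linear map, and d : 𝔄 → B(H) a σ-derivation. Then there exist a continuous *-homomorphism Σ : 𝔄 → B(H) (linear, multiplicative, and satisfying Σ(A*) = Σ(A)*) and a Σ-derivation D : 𝔄 → B(H) such that D is continuous if and only if d is continuous; moreover, if d(A*) = d(A)* for all A ∈ 𝔄, then D(A*) = D(A)* for all A ∈ 𝔄. -/

import Mathlib

open Filter Topology

section Aux
variable {H : Type*} [NormedAddCommGroup H] [InnerProductSpace ℂ H] [CompleteSpace H]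
    {𝔄 : NonUnitalStarSubalgebra ℂ (H →L[ℂ] H)}
    (σ d : 𝔄 →ₗ[ℂ] (H →L[ℂ] H))

/-- The multiplicativity defect of `σ`. -/
noncomputable def Phi (A B : 𝔄) : H →L[ℂ] H := σ (A * B) - σ A * σ B

theorem key (hd : ∀ A B : 𝔄, d (A * B) = d A * σ B + σ A * d B) (A B C : 𝔄) :
    Phi σ A B * d C = d A * Phi σ B C := by
  have h1 := hd (A * B) C
  have h2 := hd A (B * C)
  rw [mul_assoc] at h1
  rw [h1, hd A B, hd B C] at h2
  simp only [Phi, sub_mul, mul_sub, add_mul, mul_add, ← mul_assoc] at h2 ⊢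
  rw [sub_eq_sub_iff_sub_eq_sub]
  abel_nf
  abel_nf at h2
  linear_combination (norm := abel) h2

theorem sigPhi (A B C : 𝔄) :
    σ A * Phi σ B C = Phi σ (A * B) C + Phi σ A B * σ C - Phi σ A (B * C) := by
  simp only [Phi, sub_mul, mul_sub, mul_assoc]
  abel

theorem starPhi (hσ_star : ∀ A : 𝔄, σ (star A) = star (σ A)) (A B : 𝔄) :
    star (Phi σ A B) = Phi σ (star B) (star A) := by
  simp only [Phi, star_sub, ← hσ_star]
  rw [star_mul (σ A) (σ B), ← hσ_star, ← hσ_star, star_mul A B]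

end Aux

set_option maxHeartbeats 2000000 in
theorem stmt_11 {H : Type*} [NormedAddCommGroup H] [InnerProductSpace ℂ H]
    [CompleteSpace H]
    (𝔄 : NonUnitalStarSubalgebra ℂ (H →L[ℂ] H))
    (hcl : IsClosed (𝔄 : Set (H →L[ℂ] H)))
    (σ d : 𝔄 →ₗ[ℂ] (H →L[ℂ] H))
    (hσ_cont : Continuous σ)
    (hσ_star : ∀ A : 𝔄, σ (star A) = star (σ A))
    (hd : ∀ A B : 𝔄, d (A * B) = d A * σ B + σ A * d B) :
    ∃ Sig D : 𝔄 →ₗ[ℂ] (H →L[ℂ] H),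
      Continuous Sig ∧
      (∀ A B : 𝔄, Sig (A * B) = Sig A * Sig B) ∧
      (∀ A : 𝔄, Sig (star A) = star (Sig A)) ∧
      (∀ A B : 𝔄, D (A * B) = D A * Sig B + Sig A * D B) ∧
      (Continuous D ↔ Continuous d) ∧
      ((∀ A : 𝔄, d (star A) = star (d A)) → ∀ A : 𝔄, D (star A) = star (D A)) := by
  haveI : CompleteSpace 𝔄 := hcl.completeSpace_coe
  classical
  -- the span of the ranges of all Phi A B
  set M : Submodule ℂ H :=
    Submodule.span ℂ {y : H | ∃ A B : 𝔄, ∃ x : H, Phi σ A B x = y} with hM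
  set K : Submodule ℂ H := M.topologicalClosure with hK
  haveI : CompleteSpace K := (Submodule.isClosed_topologicalClosure M).completeSpace_coe
  set P : H →L[ℂ] H := K.subtypeL ∘L K.orthogonalProjectionOnto with hPdef
  have hP_mem : ∀ x : H, P x ∈ K := fun x => (K.orthogonalProjectionOnto x).2
  have hP_id : ∀ x ∈ K, P x = x := by
    intro x hx
    exact K.starProjection_eq_self_iff.mpr hx
  have hP_sa : star P = P := (isSelfAdjoint_starProjection K).star_eq
  have hP_idem : P * P = P := by
    ext x
    exact hP_id _ (hP_mem x)
  have hgen : ∀ (A B : 𝔄) (x : H), Phi σ A B x ∈ K := by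
    intro A B x
    exact M.le_topologicalClosure (Submodule.subset_span ⟨A, B, x, rfl⟩)
  have hPΦ : ∀ A B : 𝔄, P * Phi σ A B = Phi σ A B := by
    intro A B; ext x
    exact hP_id _ (hgen A B x)
  -- K is invariant under each σ A
  have hσM : ∀ (A : 𝔄), ∀ x ∈ M, σ A x ∈ M := by
    intro A x hx
    induction hx using Submodule.span_induction with
    | mem y hy =>
      obtain ⟨B, C, z, rfl⟩ := hy
      have : σ A (Phi σ B C z)
          = Phi σ (A * B) C z + Phi σ A B (σ C z) - Phi σ A (B * C) z := by
        have := congrArg (fun T => T z) (sigPhi σ A B C)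
        simpa using this
      rw [this]
      exact sub_mem (add_mem (Submodule.subset_span ⟨_, _, _, rfl⟩)
        (Submodule.subset_span ⟨_, _, _, rfl⟩)) (Submodule.subset_span ⟨_, _, _, rfl⟩)
    | zero => simpa using M.zero_mem
    | add y z _ _ hy hz => rw [map_add]; exact M.add_mem hy hz
    | smul c y _ hy => rw [map_smul]; exact M.smul_mem c hy
  have hσK : ∀ (A : 𝔄), ∀ x ∈ K, σ A x ∈ K := by
    intro A x hx
    have h1 : σ A x ∈ closure (σ A '' (M : Set H)) := by
      have := image_closure_subset_closure_image (f := σ A) (s := (M : Set H)) (σ A).continuous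
      exact this ⟨x, hx, rfl⟩
    refine closure_minimal ?_ (Submodule.isClosed_topologicalClosure M) h1
    rintro y ⟨z, hz, rfl⟩
    exact M.le_topologicalClosure (hσM A z hz)
  -- K is invariant under each d A
  have hdK : ∀ (A : 𝔄), ∀ x ∈ K, d A x ∈ K := by
    intro A x hx
    have h1 : d A x ∈ closure (d A '' (M : Set H)) := by
      have := image_closure_subset_closure_image (f := d A) (s := (M : Set H)) (d A).continuous
      exact this ⟨x, hx, rfl⟩
    refine closure_minimal ?_ (Submodule.isClosed_topologicalClosure M) h1
    rintro y ⟨z, hz, rfl⟩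
    refine M.le_topologicalClosure ?_
    induction hz using Submodule.span_induction with
    | mem y hy =>
      obtain ⟨B, C, w, rfl⟩ := hy
      have : d A (Phi σ B C w) = Phi σ A B (d C w) := by
        have := congrArg (fun T => T w) (key σ d hd A B C)
        simpa using this.symm
      rw [this]
      exact Submodule.subset_span ⟨_, _, _, rfl⟩
    | zero => simpa using M.zero_mem
    | add y z _ _ hy hz => rw [map_add]; exact M.add_mem hy hz
    | smul c y _ hy => rw [map_smul]; exact M.smul_mem c hy
  -- P commutes with σ A
  have hstep : ∀ A : 𝔄, P * (σ A * P) = σ A * P := by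
    intro A; ext x
    exact hP_id _ (hσK A _ (hP_mem x))
  have hcomm : ∀ A : 𝔄, P * σ A = σ A * P := by
    intro A
    have h1 := hstep (star A)
    have h2 := congrArg star h1
    simp only [star_mul, hP_sa, ← hσ_star, star_star] at h2
    calc P * σ A = P * σ A * P := h2.symm
      _ = σ A * P := by rw [mul_assoc]; exact hstep A
  have hΦP : ∀ A B : 𝔄, Phi σ A B * P = Phi σ A B := by
    intro A B
    have h0 := congrArg star (hPΦ (star B) (star A))
    rwa [star_mul, hP_sa, starPhi σ hσ_star, star_star, star_star] at h0
  -- the complementary projection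
  set Q : H →L[ℂ] H := 1 - P with hQdef
  have hQQ : Q * Q = Q := by
    simp only [hQdef, sub_mul, mul_sub, one_mul, mul_one, hP_idem]
    abel
  have hQσ : ∀ A : 𝔄, Q * σ A = σ A * Q := by
    intro A
    simp only [hQdef, sub_mul, mul_sub, one_mul, mul_one, hcomm A]
  have hQΦ : ∀ A B : 𝔄, Q * Phi σ A B = 0 := by
    intro A B
    simp only [hQdef, sub_mul, one_mul, hPΦ, sub_self]
  have hQstar : star Q = Q := by
    simp only [hQdef, star_sub, star_one, hP_sa]
  have hdP : ∀ A : 𝔄, d A * P = P * (d A * P) := by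
    intro A; ext x
    exact (hP_id _ (hdK A _ (hP_mem x))).symm
  have hQP : Q * P = 0 := by
    simp only [hQdef, sub_mul, one_mul, hP_idem, sub_self]
  have hQd : ∀ A : 𝔄, Q * d A * Q = Q * d A := by
    intro A
    have : Q * (d A * P) = 0 := by
      rw [hdP A, ← mul_assoc, hQP, zero_mul]
    simp only [hQdef, mul_sub, mul_one]
    rw [sub_eq_self]
    simpa [mul_assoc] using this
  -- the new homomorphism and derivation
  set Sig : 𝔄 →ₗ[ℂ] (H →L[ℂ] H) :=
    { toFun := fun A => Q * σ A
      map_add' := fun A B => by simp only [map_add, mul_add]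
      map_smul' := fun c A => by simp only [map_smul, mul_smul_comm, RingHom.id_apply] }
    with hSigdef
  set D : 𝔄 →ₗ[ℂ] (H →L[ℂ] H) :=
    { toFun := fun A => Q * d A * Q
      map_add' := fun A B => by simp only [map_add, mul_add, add_mul]
      map_smul' := fun c A => by
        simp only [map_smul, mul_smul_comm, smul_mul_assoc, RingHom.id_apply] }
    with hDdef
  have hSig_apply : ∀ A : 𝔄, Sig A = Q * σ A := fun A => rfl
  have hD_apply : ∀ A : 𝔄, D A = Q * d A * Q := fun A => rfl
  -- the continuous correction term
  set Ψ : 𝔄 →ₗ[ℂ] (H →L[ℂ] H) :=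
    { toFun := fun A => P * d A
      map_add' := fun A B => by simp only [map_add, mul_add]
      map_smul' := fun c A => by simp only [map_smul, mul_smul_comm, RingHom.id_apply] }
    with hΨdef
  have hΨ_cont : Continuous Ψ := by
    apply Ψ.continuous_of_seq_closed_graph
    intro u x y hux huy
    set Z : H →L[ℂ] H := y - P * d x with hZdef
    have hZK : ∀ h : H, Z h ∈ K := by
      intro h
      have h1 : Tendsto (fun n => (P * d (u n)) h) atTop (𝓝 (y h)) :=
        ((ContinuousLinearMap.apply ℂ H h).continuous.tendsto y).comp huy
      have h2 : y h ∈ K := by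
        refine (Submodule.isClosed_topologicalClosure M).mem_of_tendsto h1
          (Filter.Eventually.of_forall fun n => ?_)
        exact hP_mem ((d (u n)) h)
      have h3 : (P * d x) h ∈ K := by simpa using hP_mem ((d x) h)
      simpa [hZdef] using K.sub_mem h2 h3
    have hΦZ : ∀ A B : 𝔄, Phi σ (star B) (star A) * Z = 0 := by
      intro A B
      have e1 : ∀ n, Phi σ (star B) (star A) * (P * d (u n))
          = d (star B) * Phi σ (star A) (u n) := by
        intro n
        rw [← mul_assoc, hΦP, key σ d hd]
      have l1 : Tendsto (fun n => d (star B) * Phi σ (star A) (u n)) atTop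
          (𝓝 (Phi σ (star B) (star A) * y)) := by
        have l0 : Tendsto (fun n => Phi σ (star B) (star A) * (P * d (u n))) atTop
            (𝓝 (Phi σ (star B) (star A) * y)) := huy.const_mul _
        simpa only [e1] using l0
      have c1 : Continuous fun A' : 𝔄 => Phi σ (star A) A' := by
        have c2 : Continuous fun A' : 𝔄 => σ (star A * A') :=
          hσ_cont.comp (continuous_const.mul continuous_id)
        exact c2.sub (continuous_const.mul hσ_cont)
      have l2 : Tendsto (fun n => d (star B) * Phi σ (star A) (u n)) atTop
          (𝓝 (d (star B) * Phi σ (star A) x)) :=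
        (((continuous_const.mul c1).tendsto x).comp hux)
      have e3 : Phi σ (star B) (star A) * y = d (star B) * Phi σ (star A) x :=
        tendsto_nhds_unique l1 l2
      have e4 : Phi σ (star B) (star A) * (P * d x) = d (star B) * Phi σ (star A) x := by
        rw [← mul_assoc, hΦP, key σ d hd]
      rw [hZdef, mul_sub, e3, e4, sub_self]
    have hZ0 : Z = 0 := by
      ext h
      have hmem := hZK h
      have hspan : ∀ v ∈ M, (inner ℂ v (Z h) : ℂ) = 0 := by
        intro v hv
        induction hv using Submodule.span_induction with
        | mem w hw =>
          obtain ⟨A, B, z, rfl⟩ := hw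
          have hadj : (inner ℂ (Phi σ A B z) (Z h) : ℂ)
              = inner ℂ z ((ContinuousLinearMap.adjoint (Phi σ A B)) (Z h)) := by
            rw [ContinuousLinearMap.adjoint_inner_right]
          rw [hadj, ← ContinuousLinearMap.star_eq_adjoint, starPhi σ hσ_star]
          have := congrArg (fun T : H →L[ℂ] H => T h) (hΦZ A B)
          simp only [ContinuousLinearMap.mul_apply, ContinuousLinearMap.zero_apply] at this
          rw [this, inner_zero_right]
        | zero => simp
        | add y' z' _ _ hy' hz' => simp [inner_add_left, hy', hz']
        | smul c y' _ hy' => simp [inner_smul_left, hy']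
      have hclos : ∀ v ∈ (K : Set H), (inner ℂ v (Z h) : ℂ) = 0 := by
        have hcl2 : IsClosed {w : H | (inner ℂ w (Z h) : ℂ) = 0} :=
          isClosed_eq (continuous_id.inner continuous_const) continuous_const
        intro v hv
        exact closure_minimal (fun w hw => hspan w hw) hcl2 hv
      have : (inner ℂ (Z h) (Z h) : ℂ) = 0 := hclos (Z h) hmem
      have : Z h = 0 := inner_self_eq_zero.mp this
      simpa using this
    have : y = P * d x := by
      have := sub_eq_zero.mp hZ0
      simpa [hZdef] using this
    simpa [hΨdef] using this
  refine ⟨Sig, D, ?_, ?_, ?_, ?_, ?_, ?_⟩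
  · -- continuity of Sig
    exact continuous_const.mul hσ_cont
  · -- multiplicativity
    intro A B
    rw [hSig_apply, hSig_apply, hSig_apply]
    have hswap : ∀ (A' : 𝔄) (Y : H →L[ℂ] H), σ A' * (Q * Y) = Q * (σ A' * Y) := by
      intro A' Y
      rw [← mul_assoc, ← hQσ, mul_assoc]
    have hQQ' : ∀ Y : H →L[ℂ] H, Q * (Q * Y) = Q * Y := by
      intro Y
      rw [← mul_assoc, hQQ]
    have e1 : Q * σ A * (Q * σ B) = Q * (σ A * σ B) := by
      simp only [mul_assoc]
      rw [hswap, hQQ']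
    rw [e1]
    have e2 := hQΦ A B
    simp only [Phi, mul_sub] at e2
    exact sub_eq_zero.mp e2
  · -- star preservation of Sig
    intro A
    rw [hSig_apply, hSig_apply, star_mul, hQstar, ← hσ_star, hQσ]
  · -- D is a Sig-derivation
    intro A B
    rw [hD_apply, hD_apply, hD_apply, hSig_apply, hSig_apply, hd A B]
    have hswap : ∀ (A' : 𝔄) (Y : H →L[ℂ] H), σ A' * (Q * Y) = Q * (σ A' * Y) := by
      intro A' Y
      rw [← mul_assoc, ← hQσ, mul_assoc]
    have hQQ' : ∀ Y : H →L[ℂ] H, Q * (Q * Y) = Q * Y := by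
      intro Y
      rw [← mul_assoc, hQQ]
    have t1 : Q * d A * Q * (Q * σ B) = Q * (d A * σ B) * Q := by
      simp only [mul_assoc]
      rw [hQQ', hQσ]
    have t2 : Q * σ A * (Q * d B * Q) = Q * (σ A * d B) * Q := by
      simp only [mul_assoc]
      rw [hswap, hQQ']
    rw [mul_add, add_mul, t1, t2]
  · -- continuity equivalence
    constructor
    · intro hD
      have hdec : ⇑d = fun A => D A + Ψ A := by
        funext A
        rw [hD_apply, hQd A, hΨdef]
        show d A = Q * d A + P * d A
        rw [hQdef, sub_mul, one_mul, sub_add_cancel]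
      rw [hdec]
      exact hD.add hΨ_cont
    · intro hdc
      show Continuous fun A => Q * d A * Q
      exact (continuous_const.mul hdc).mul continuous_const
  · -- star preservation of D
    intro hstar A
    rw [hD_apply, hD_apply, hstar A, star_mul, star_mul, hQstar, mul_assoc]
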